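/- arXiv:1201.1166 — 2 statements merged into one kernel-verified Lean document; each statement's English description precedes it below -/
import Mathlib

section
/- For the stationary AR(1) process and any α > 0, n^{-(1+α/2)} Σ_{t=2}^n |X_{t-1}|^{2+α} → 0 in probability as n → ∞. -/
open MeasureTheory ProbabilityTheory Filter Set
open scoped ENNReal NNReal Topology

/-- For the stationary AR(1) process and any α > 0,
n^{-(1+α/2)} Σ_{t=2}^n |X_{t-1}|^{2+α} → 0 in probability as n → ∞. -/
theorem power_sum_negligible_ar1
{Ω : Type*} [MeasurableSpace Ω] (P : Measure Ω) [IsProbabilityMeasure P]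
    (X Z : ℕ → Ω → ℝ) (θ σ : ℝ)
    (hXmeas : ∀ t, Measurable (X t)) (hZmeas : ∀ t, Measurable (Z t))
    (hθ : |θ| < 1) (hσ : 0 < σ)
    (hAR : ∀ t ω, X (t + 1) ω = θ * X t ω + Z (t + 1) ω)
    (hZindep : iIndepFun Z P)
    (hZident : ∀ t, Measure.map (Z t) P = Measure.map (Z 1) P)
    (hZmean : ∫ ω, Z 1 ω ∂P = 0)
    (hZ2 : Integrable (fun ω => (Z 1 ω) ^ 2) P)
    (hZvar : ∫ ω, (Z 1 ω) ^ 2 ∂P = σ ^ 2)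
    (hX2 : Integrable (fun ω => (X 1 ω) ^ 2) P)
    (hstat : ∀ m k : ℕ, Measure.map (fun ω (i : Fin m) => X (i.1 + k) ω) P
        = Measure.map (fun ω (i : Fin m) => X i.1 ω) P) :
    ∀ α > (0:ℝ), ∀ e > (0:ℝ), Tendsto (fun n : ℕ =>
      P {ω | e < ((n : ℝ) ^ ((1:ℝ) + α / 2))⁻¹ *
          ∑ t ∈ Finset.Icc 2 n, |X (t - 1) ω| ^ ((2:ℝ) + α)})
      atTop (𝓝 0) := by
  intro α hα e he
  classical
  -- identical one-dimensional distributions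
  have hmap : ∀ t, Measure.map (X t) P = Measure.map (X 0) P := by
    intro t
    have h := hstat 1 t
    have hmt : Measurable (fun ω (i : Fin 1) => X (i.1 + t) ω) :=
      measurable_pi_lambda _ fun i => hXmeas _
    have hm0 : Measurable (fun ω (i : Fin 1) => X i.1 ω) :=
      measurable_pi_lambda _ fun i => hXmeas _
    have h2 := congrArg (Measure.map (fun f : Fin 1 → ℝ => f 0)) h
    rw [Measure.map_map (measurable_pi_apply 0) hmt,
        Measure.map_map (measurable_pi_apply 0) hm0] at h2
    simpa [Function.comp_def] using h2
  set I : ℝ := ∫ ω, X 1 ω ^ 2 ∂P with hI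
  have hInn : 0 ≤ I := integral_nonneg fun ω => sq_nonneg _
  have hprob : ∀ (t : ℕ) (c : ℝ), P {ω | c < |X t ω|} = P {ω | c < |X 1 ω|} := by
    intro t c
    have hs : MeasurableSet {x : ℝ | c < |x|} :=
      measurableSet_lt measurable_const measurable_abs
    have h1 : ∀ u : ℕ, P {ω | c < |X u ω|} = Measure.map (X u) P {x | c < |x|} := by
      intro u
      rw [Measure.map_apply (hXmeas u) hs]
      rfl
    rw [h1 t, h1 1, hmap t, hmap 1]
  have hint2 : ∀ t, Integrable (fun ω => X t ω ^ 2) P := by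
    intro t
    have hg : ∀ u : ℕ, AEStronglyMeasurable (fun x : ℝ => x ^ 2) (Measure.map (X u) P) :=
      fun u => (continuous_pow 2).aestronglyMeasurable
    have h1 : Integrable (fun x : ℝ => x ^ 2) (Measure.map (X t) P) := by
      rw [hmap t, ← hmap 1]
      exact (integrable_map_measure (hg 1) (hXmeas 1).aemeasurable).mpr hX2
    have := (integrable_map_measure (hg t) (hXmeas t).aemeasurable).mp h1
    simpa [Function.comp_def] using this
  have hEint : ∀ t, ∫ ω, X t ω ^ 2 ∂P = I := by
    intro t
    have h1 : ∀ u : ℕ, ∫ ω, X u ω ^ 2 ∂P = ∫ x, x ^ 2 ∂(Measure.map (X u) P) := by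
      intro u
      rw [integral_map (hXmeas u).aemeasurable (continuous_pow 2).aestronglyMeasurable]
    rw [hI, h1 t, h1 1, hmap t, hmap 1]
  -- key pointwise bound
  have key : ∀ x M : ℝ, 0 ≤ x → x ≤ M → x ^ ((2:ℝ) + α) ≤ M ^ α * x ^ 2 := by
    intro x M hx hxM
    rcases eq_or_lt_of_le hx with h0 | h0
    · have hM : 0 ≤ M := h0.le.trans hxM
      rw [← h0, Real.zero_rpow (by intro h; linarith)]
      have : (0:ℝ) ^ 2 = 0 := by norm_num
      rw [this, mul_zero]
    · have hxe : x ^ ((2:ℝ) + α) = x ^ 2 * x ^ α := by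
        rw [← Real.rpow_natCast x 2, ← Real.rpow_add h0]
        norm_num
      rw [hxe, mul_comm (M ^ α)]
      exact mul_le_mul_of_nonneg_left (Real.rpow_le_rpow hx hxM hα.le) (by positivity)
  rw [ENNReal.tendsto_atTop_zero]
  intro η hη
  set η' : ℝ≥0∞ := min η 1 with hη'def
  have hη'pos : 0 < η' := lt_min hη zero_lt_one
  have hη'top : η' ≠ ⊤ := ((min_le_right η 1).trans_lt (by norm_num)).ne
  set δ : ℝ := η'.toReal with hδdef
  have hδpos : 0 < δ := ENNReal.toReal_pos hη'pos.ne' hη'top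
  set c : ℝ := δ * e / (2 * (I + 1)) with hcdef
  have hcpos : 0 < c := by positivity
  set ε : ℝ := c ^ (α⁻¹) with hεdef
  have hεpos : 0 < ε := Real.rpow_pos_of_pos hcpos _
  have hεα : ε ^ α = c := by
    rw [hεdef, ← Real.rpow_mul hcpos.le, inv_mul_cancel₀ hα.ne', Real.rpow_one]
  have hεαpos : 0 < ε ^ α := by rw [hεα]; exact hcpos
  -- truncated second moment
  set J : ℕ → ℝ := fun n =>
    ∫ ω, Set.indicator {ω' | ε * Real.sqrt n < |X 1 ω'|} (fun ω' => X 1 ω' ^ 2) ω ∂P with hJ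
  have hsmeas : ∀ n : ℕ, MeasurableSet {ω' | ε * Real.sqrt n < |X 1 ω'|} :=
    fun n => measurableSet_lt measurable_const (hXmeas 1).abs
  have hindnn : ∀ (n : ℕ) (ω : Ω),
      0 ≤ Set.indicator {ω' | ε * Real.sqrt n < |X 1 ω'|} (fun ω' => X 1 ω' ^ 2) ω :=
    fun n ω => Set.indicator_nonneg (fun _ _ => sq_nonneg _) ω
  have hindle : ∀ (n : ℕ) (ω : Ω),
      ‖Set.indicator {ω' | ε * Real.sqrt n < |X 1 ω'|} (fun ω' => X 1 ω' ^ 2) ω‖ ≤ X 1 ω ^ 2 := by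
    intro n ω
    rw [Real.norm_eq_abs, abs_of_nonneg (hindnn n ω)]
    by_cases hmem : ω ∈ {ω' | ε * Real.sqrt n < |X 1 ω'|}
    · rw [Set.indicator_of_mem hmem]
    · rw [Set.indicator_of_notMem hmem]
      exact sq_nonneg _
  have hindmeas : ∀ n : ℕ, Measurable
      (Set.indicator {ω' | ε * Real.sqrt n < |X 1 ω'|} (fun ω' => X 1 ω' ^ 2)) :=
    fun n => ((hXmeas 1).pow_const 2).indicator (hsmeas n)
  have hJtend : Tendsto J atTop (𝓝 0) := by
    have h0 : (0:ℝ) = ∫ _ω, (0:ℝ) ∂P := by simp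
    rw [hJ, h0]
    apply tendsto_integral_filter_of_dominated_convergence (fun ω => X 1 ω ^ 2)
    · exact Filter.Eventually.of_forall fun n => (hindmeas n).aestronglyMeasurable
    · exact Filter.Eventually.of_forall fun n =>
        Filter.Eventually.of_forall fun ω => hindle n ω
    · exact hX2
    · refine Filter.Eventually.of_forall fun ω => ?_
      have hev : ∀ᶠ n : ℕ in atTop,
          Set.indicator {ω' | ε * Real.sqrt n < |X 1 ω'|} (fun ω' => X 1 ω' ^ 2) ω = 0 := by
        filter_upwards [eventually_ge_atTop ⌈(|X 1 ω| / ε) ^ 2⌉₊] with n hn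
        apply Set.indicator_of_notMem
        intro hmem
        have h1 : (|X 1 ω| / ε) ^ 2 ≤ (n : ℝ) :=
          le_trans (Nat.le_ceil _) (by exact_mod_cast hn)
        have h2 : |X 1 ω| / ε ≤ Real.sqrt n :=
          (Real.le_sqrt (by positivity) (by positivity)).mpr h1
        have h3 : |X 1 ω| ≤ ε * Real.sqrt n := by
          rw [div_le_iff₀ hεpos] at h2
          linarith [h2]
        exact absurd hmem (not_lt.mpr h3 : ¬ ε * Real.sqrt n < |X 1 ω|)
      exact Tendsto.congr' (hev.mono fun n h => h.symm) tendsto_const_nhds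
  -- Markov bound for the max part
  have hq : ∀ n : ℕ, 1 ≤ n → (n : ℝ≥0∞) * P {ω | ε * Real.sqrt n < |X 1 ω|} ≤
      ENNReal.ofReal (J n / ε ^ 2) := by
    intro n hn
    have hn' : (0:ℝ) < n := by exact_mod_cast hn
    set s := {ω | ε * Real.sqrt n < |X 1 ω|} with hsdef
    set g := Set.indicator s fun ω' => X 1 ω' ^ 2 with hgdef
    have hgint : Integrable g P :=
      hX2.mono' (hindmeas n).aestronglyMeasurable (Filter.Eventually.of_forall (hindle n))
    have hmark := mul_meas_ge_le_integral_of_nonneg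
      (Filter.Eventually.of_forall (hindnn n)) hgint (ε ^ 2 * n)
    have hsub : s ⊆ {ω | ε ^ 2 * n ≤ g ω} := by
      intro ω hω
      have h1 : g ω = X 1 ω ^ 2 := Set.indicator_of_mem hω _
      have h2 : (ε * Real.sqrt n) ^ 2 < |X 1 ω| ^ 2 :=
        pow_lt_pow_left₀ hω (by positivity) two_ne_zero
      have h3 : (ε * Real.sqrt n) ^ 2 = ε ^ 2 * n := by
        rw [mul_pow, Real.sq_sqrt (Nat.cast_nonneg n)]
      have : ε ^ 2 * (n : ℝ) ≤ X 1 ω ^ 2 := by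
        rw [← h3, ← sq_abs (X 1 ω)]
        exact h2.le
      rw [Set.mem_setOf_eq, h1]
      exact this
    have hpos : (0:ℝ) < ε ^ 2 * n := by positivity
    have hPs : P s ≠ ⊤ := measure_ne_top _ _
    have h3 : (P s).toReal ≤ J n / (ε ^ 2 * n) := by
      rw [le_div_iff₀ hpos]
      calc (P s).toReal * (ε ^ 2 * n)
          ≤ (P {ω | ε ^ 2 * n ≤ g ω}).toReal * (ε ^ 2 * n) :=
            mul_le_mul_of_nonneg_right
              (ENNReal.toReal_mono (measure_ne_top _ _) (measure_mono hsub)) hpos.le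
        _ = ε ^ 2 * n * (P {ω | ε ^ 2 * n ≤ g ω}).toReal := mul_comm _ _
        _ ≤ ∫ ω, g ω ∂P := hmark
        _ = J n := rfl
    calc (n : ℝ≥0∞) * P s = ENNReal.ofReal ((n : ℝ) * (P s).toReal) := by
          rw [ENNReal.ofReal_mul (by positivity), ENNReal.ofReal_toReal hPs,
            ENNReal.ofReal_natCast]
      _ ≤ ENNReal.ofReal (J n / ε ^ 2) := by
          apply ENNReal.ofReal_le_ofReal
          calc (n : ℝ) * (P s).toReal ≤ n * (J n / (ε ^ 2 * n)) := by
                gcongr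
            _ = J n / ε ^ 2 := by
                field_simp
  -- Markov bound for the variance part
  have hC : ∀ n : ℕ, 1 ≤ n →
      P {ω | e * n / ε ^ α < ∑ t ∈ Finset.Icc 2 n, X (t - 1) ω ^ 2} ≤
      ENNReal.ofReal (δ / 2) := by
    intro n hn
    have hn' : (0:ℝ) < n := by exact_mod_cast hn
    set Y : Ω → ℝ := fun ω => ∑ t ∈ Finset.Icc 2 n, X (t - 1) ω ^ 2 with hY
    have hYint : Integrable Y P := integrable_finset_sum _ fun t _ => hint2 (t - 1)
    have hYnn : 0 ≤ᵐ[P] Y :=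
      Filter.Eventually.of_forall fun ω => Finset.sum_nonneg fun t _ => sq_nonneg _
    have hEY : ∫ ω, Y ω ∂P ≤ n * I := by
      rw [hY, integral_finset_sum _ fun t _ => hint2 (t - 1)]
      calc ∑ t ∈ Finset.Icc 2 n, ∫ ω, X (t - 1) ω ^ 2 ∂P
          = ∑ _t ∈ Finset.Icc 2 n, I := Finset.sum_congr rfl fun t _ => hEint _
        _ = ((Finset.Icc 2 n).card : ℝ) * I := by rw [Finset.sum_const, nsmul_eq_mul]
        _ ≤ (n : ℝ) * I := by
            have hcard : (Finset.Icc 2 n).card ≤ n := by rw [Nat.card_Icc]; omega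
            gcongr
    set cn : ℝ := e * n / ε ^ α with hcn
    have hcnpos : 0 < cn := by
      rw [hcn]
      positivity
    have hmark := mul_meas_ge_le_integral_of_nonneg hYnn hYint cn
    have h1 : (P {ω | cn < Y ω}).toReal ≤ (n * I) / cn := by
      rw [le_div_iff₀ hcnpos]
      have hsub : {ω | cn < Y ω} ⊆ {ω | cn ≤ Y ω} :=
        fun ω hω => show cn ≤ Y ω from le_of_lt hω
      calc (P {ω | cn < Y ω}).toReal * cn
          ≤ (P {ω | cn ≤ Y ω}).toReal * cn :=
            mul_le_mul_of_nonneg_right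
              (ENNReal.toReal_mono (measure_ne_top _ _) (measure_mono hsub)) hcnpos.le
        _ = cn * (P {ω | cn ≤ Y ω}).toReal := mul_comm _ _
        _ ≤ ∫ ω, Y ω ∂P := hmark
        _ ≤ n * I := hEY
    have h2 : (n : ℝ) * I / cn ≤ δ / 2 := by
      have heq : (n : ℝ) * I / cn = I * ε ^ α / e := by
        rw [hcn]
        field_simp
      rw [heq, hεα, hcdef]
      rw [div_le_div_iff₀ he (by norm_num : (0:ℝ) < 2)]
      have h4 : I * (δ * e / (2 * (I + 1))) * 2 = (I / (I + 1)) * (δ * e) := by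
        field_simp
      rw [h4]
      have h5 : I / (I + 1) ≤ 1 := by
        rw [div_le_one (by linarith)]
        linarith
      calc (I / (I + 1)) * (δ * e) ≤ 1 * (δ * e) := by
            apply mul_le_mul_of_nonneg_right h5
            positivity
        _ = δ * e := one_mul _
    calc P {ω | cn < Y ω} = ENNReal.ofReal ((P {ω | cn < Y ω}).toReal) :=
          (ENNReal.ofReal_toReal (measure_ne_top _ _)).symm
      _ ≤ ENNReal.ofReal (δ / 2) := ENNReal.ofReal_le_ofReal (h1.trans h2)
  -- choose N for the truncated part
  obtain ⟨N1, hN1⟩ : ∃ N, ∀ n ≥ N, ENNReal.ofReal (J n / ε ^ 2) ≤ η' / 2 := by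
    have htend : Tendsto (fun n => ENNReal.ofReal (J n / ε ^ 2)) atTop (𝓝 0) := by
      have h1 : Tendsto (fun n => J n / ε ^ 2) atTop (𝓝 0) := by
        simpa using hJtend.div_const (ε ^ 2)
      simpa using ENNReal.tendsto_ofReal h1
    have h2 : (0:ℝ≥0∞) < η' / 2 := ENNReal.div_pos hη'pos.ne' (by norm_num)
    exact ENNReal.tendsto_atTop_zero.mp htend (η' / 2) h2
  refine ⟨max N1 2, fun n hn => ?_⟩
  have hn2 : 2 ≤ n := le_trans (le_max_right _ _) hn
  have hn1 : 1 ≤ n := by omega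
  have npos : (0:ℝ) < n := by exact_mod_cast hn1
  -- the subset decomposition
  have hsub : {ω | e < ((n : ℝ) ^ ((1:ℝ) + α / 2))⁻¹ *
          ∑ t ∈ Finset.Icc 2 n, |X (t - 1) ω| ^ ((2:ℝ) + α)}
      ⊆ (⋃ t ∈ Finset.Icc 2 n, {ω | ε * Real.sqrt n < |X (t - 1) ω|}) ∪
        {ω | e * n / ε ^ α < ∑ t ∈ Finset.Icc 2 n, X (t - 1) ω ^ 2} := by
    intro ω hω
    by_cases hB : ∃ t ∈ Finset.Icc 2 n, ε * Real.sqrt n < |X (t - 1) ω|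
    · left
      obtain ⟨t, ht, hlt⟩ := hB
      exact Set.mem_biUnion ht hlt
    · right
      push_neg at hB
      have hbound : ∀ t ∈ Finset.Icc 2 n,
          |X (t - 1) ω| ^ ((2:ℝ) + α) ≤ (ε * Real.sqrt n) ^ α * X (t - 1) ω ^ 2 := by
        intro t ht
        have := key |X (t - 1) ω| (ε * Real.sqrt n) (abs_nonneg _) (hB t ht)
        simpa [sq_abs] using this
      have hsum : ∑ t ∈ Finset.Icc 2 n, |X (t - 1) ω| ^ ((2:ℝ) + α) ≤
          (ε * Real.sqrt n) ^ α * ∑ t ∈ Finset.Icc 2 n, X (t - 1) ω ^ 2 := by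
        rw [Finset.mul_sum]
        exact Finset.sum_le_sum hbound
      set T : ℝ := ∑ t ∈ Finset.Icc 2 n, X (t - 1) ω ^ 2 with hT
      have hrp : (ε * Real.sqrt n) ^ α = ε ^ α * (n : ℝ) ^ (α / 2) := by
        rw [Real.mul_rpow hεpos.le (Real.sqrt_nonneg _), Real.sqrt_eq_rpow,
          ← Real.rpow_mul (Nat.cast_nonneg n)]
        ring_nf
      have hnsplit : (n : ℝ) ^ ((1:ℝ) + α / 2) = (n : ℝ) * (n : ℝ) ^ (α / 2) := by
        rw [Real.rpow_add npos, Real.rpow_one]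
      have hp : (0:ℝ) < (n : ℝ) ^ (α / 2) := Real.rpow_pos_of_pos npos _
      have hinvnn : (0:ℝ) ≤ ((n : ℝ) ^ ((1:ℝ) + α / 2))⁻¹ := by positivity
      have hω' : e < ((n : ℝ) ^ ((1:ℝ) + α / 2))⁻¹ * ((ε ^ α * (n : ℝ) ^ (α / 2)) * T) := by
        refine lt_of_lt_of_le hω ?_
        apply mul_le_mul_of_nonneg_left _ hinvnn
        rw [← hrp]
        exact hsum
      have heq : ((n : ℝ) ^ ((1:ℝ) + α / 2))⁻¹ * ((ε ^ α * (n : ℝ) ^ (α / 2)) * T) =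
          ε ^ α * T / n := by
        rw [hnsplit]
        field_simp
      rw [heq] at hω'
      have h5 : e * n < ε ^ α * T := (lt_div_iff₀ npos).mp hω'
      show e * n / ε ^ α < T
      rw [div_lt_iff₀ hεαpos]
      linarith [h5]
  -- union bound for the max part
  have hBbd : P (⋃ t ∈ Finset.Icc 2 n, {ω | ε * Real.sqrt n < |X (t - 1) ω|}) ≤
      (n : ℝ≥0∞) * P {ω | ε * Real.sqrt n < |X 1 ω|} := by
    calc P (⋃ t ∈ Finset.Icc 2 n, {ω | ε * Real.sqrt n < |X (t - 1) ω|})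
        ≤ ∑ t ∈ Finset.Icc 2 n, P {ω | ε * Real.sqrt n < |X (t - 1) ω|} :=
          measure_biUnion_finset_le _ _
      _ = ∑ _t ∈ Finset.Icc 2 n, P {ω | ε * Real.sqrt n < |X 1 ω|} :=
          Finset.sum_congr rfl fun t _ => hprob _ _
      _ = ((Finset.Icc 2 n).card : ℝ≥0∞) * P {ω | ε * Real.sqrt n < |X 1 ω|} := by
          rw [Finset.sum_const, nsmul_eq_mul]
      _ ≤ (n : ℝ≥0∞) * P {ω | ε * Real.sqrt n < |X 1 ω|} := by
          gcongr
          have hcard : (Finset.Icc 2 n).card ≤ n := by rw [Nat.card_Icc]; omega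
          exact_mod_cast hcard
  calc P {ω | e < ((n : ℝ) ^ ((1:ℝ) + α / 2))⁻¹ *
          ∑ t ∈ Finset.Icc 2 n, |X (t - 1) ω| ^ ((2:ℝ) + α)}
      ≤ P ((⋃ t ∈ Finset.Icc 2 n, {ω | ε * Real.sqrt n < |X (t - 1) ω|}) ∪
        {ω | e * n / ε ^ α < ∑ t ∈ Finset.Icc 2 n, X (t - 1) ω ^ 2}) := measure_mono hsub
    _ ≤ P (⋃ t ∈ Finset.Icc 2 n, {ω | ε * Real.sqrt n < |X (t - 1) ω|}) +
        P {ω | e * n / ε ^ α < ∑ t ∈ Finset.Icc 2 n, X (t - 1) ω ^ 2} :=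
          measure_union_le _ _
    _ ≤ η' / 2 + ENNReal.ofReal (δ / 2) := by
        gcongr
        · exact le_trans hBbd (le_trans (hq n hn1) (hN1 n (le_trans (le_max_left _ _) hn)))
        · exact hC n hn1
    _ ≤ η' / 2 + η' / 2 := by
        gcongr
        have : ENNReal.ofReal (δ / 2) = η' / 2 := by
          rw [ENNReal.ofReal_div_of_pos (by norm_num), hδdef,
            ENNReal.ofReal_toReal hη'top]
          norm_num
        rw [this]
    _ = η' := ENNReal.add_halves _
    _ ≤ η := min_le_left _ _
end

section
/- Let (w_1,…,w_n) ~ Multinomial(n; 1/n,…,1/n) and W_t = √(n/(n−1))(w_t − 1). Then (1/n) Σ_{t=1}^n W_t² → 1 in probability as n → ∞. -/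
open MeasureTheory ProbabilityTheory Filter Set
open scoped ENNReal NNReal Topology

set_option linter.unusedSectionVars false
set_option maxHeartbeats 1000000

section Comb
variable {n : ℕ} {g : ℕ → ℕ}

lemma comb_sum_card (hg : ∀ j < n, g j < n) :
    ∑ t ∈ Finset.range n, ((Finset.range n).filter (fun j => g j = t)).card = n := by
  rw [← Finset.card_eq_sum_card_fiberwise
    (fun j hj => Finset.mem_range.2 (hg j (Finset.mem_range.1 hj))), Finset.card_range]

lemma comb_sum_sq (hg : ∀ j < n, g j < n) :
    ∑ t ∈ Finset.range n, ((Finset.range n).filter (fun j => g j = t)).card ^ 2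
      = n + 2 * ((Finset.range n ×ˢ Finset.range n).filter (fun p => p.1 < p.2 ∧ g p.1 = g p.2)).card := by
  classical
  set F : ℕ → Finset ℕ := fun t => (Finset.range n).filter (fun j => g j = t) with hF
  set D : Finset (ℕ × ℕ) := (Finset.range n ×ˢ Finset.range n).filter (fun p => g p.1 = g p.2) with hD
  have hmemF : ∀ t j, j ∈ F t ↔ j < n ∧ g j = t := by
    intro t j; simp [hF]
  have hmemD : ∀ p : ℕ × ℕ, p ∈ D ↔ (p.1 < n ∧ p.2 < n) ∧ g p.1 = g p.2 := by
    intro p; simp [hD, Finset.mem_product, and_assoc]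
  have h1 : ∀ t, (F t).card ^ 2 = (F t ×ˢ F t).card := by
    intro t; rw [Finset.card_product, pow_two]
  have hdisj : ∀ t ∈ Finset.range n, ∀ s ∈ Finset.range n, t ≠ s → Disjoint (F t ×ˢ F t) (F s ×ˢ F s) := by
    intro t _ s _ hts
    rw [Finset.disjoint_left]
    intro p hp hp'
    rw [Finset.mem_product] at hp hp'
    exact hts (((hmemF t p.1).1 hp.1).2.symm.trans ((hmemF s p.1).1 hp'.1).2)
  have h2 : (Finset.range n).biUnion (fun t => F t ×ˢ F t) = D := by
    ext p
    rw [Finset.mem_biUnion, hmemD]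
    constructor
    · rintro ⟨t, _, hp⟩
      rw [Finset.mem_product, hmemF, hmemF] at hp
      exact ⟨⟨hp.1.1, hp.2.1⟩, hp.1.2.trans hp.2.2.symm⟩
    · rintro ⟨⟨hp1, hp2⟩, hp3⟩
      refine ⟨g p.1, Finset.mem_range.2 (hg p.1 hp1), ?_⟩
      rw [Finset.mem_product, hmemF, hmemF]
      exact ⟨⟨hp1, rfl⟩, hp2, hp3.symm⟩
  have h3 : ∑ t ∈ Finset.range n, ((F t).card ^ 2) = D.card := by
    simp_rw [h1]
    rw [← Finset.card_biUnion hdisj, h2]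
  have hsplit : D = (D.filter (fun p => p.1 = p.2))
      ∪ ((D.filter (fun p => p.1 < p.2)) ∪ (D.filter (fun p => p.2 < p.1))) := by
    ext p
    simp only [Finset.mem_union, Finset.mem_filter]
    constructor
    · intro hp
      rcases lt_trichotomy p.1 p.2 with h | h | h
      · exact Or.inr (Or.inl ⟨hp, h⟩)
      · exact Or.inl ⟨hp, h⟩
      · exact Or.inr (Or.inr ⟨hp, h⟩)
    · rintro (⟨hp, _⟩ | ⟨hp, _⟩ | ⟨hp, _⟩) <;> exact hp
  have hd1 : Disjoint (D.filter (fun p => p.1 = p.2))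
      ((D.filter (fun p => p.1 < p.2)) ∪ (D.filter (fun p => p.2 < p.1))) := by
    rw [Finset.disjoint_left]
    intro p hp hp'
    simp only [Finset.mem_filter] at hp
    simp only [Finset.mem_union, Finset.mem_filter] at hp'
    have h5 := hp.2
    rcases hp' with ⟨_, h6⟩ | ⟨_, h6⟩ <;> omega
  have hd2 : Disjoint (D.filter (fun p => p.1 < p.2)) (D.filter (fun p => p.2 < p.1)) := by
    rw [Finset.disjoint_left]
    intro p hp hp'
    simp only [Finset.mem_filter] at hp hp'
    have h5 := hp.2
    have h6 := hp'.2
    omega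
  have hcard_eq : (D.filter (fun p => p.1 = p.2)).card = n := by
    have himg : D.filter (fun p => p.1 = p.2) = (Finset.range n).image (fun j => (j, j)) := by
      ext p
      simp only [Finset.mem_filter, Finset.mem_image, Finset.mem_range, hmemD]
      constructor
      · rintro ⟨⟨⟨h1', _⟩, _⟩, h4⟩
        exact ⟨p.1, h1', Prod.ext rfl h4⟩
      · rintro ⟨j, hj, rfl⟩
        exact ⟨⟨⟨hj, hj⟩, rfl⟩, rfl⟩
    rw [himg, Finset.card_image_of_injective _
      (fun u v huv => by simpa using congrArg Prod.fst huv), Finset.card_range]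
  have hswap : (D.filter (fun p => p.2 < p.1)).card = (D.filter (fun p => p.1 < p.2)).card := by
    refine Finset.card_bij' (fun p _ => p.swap) (fun p _ => p.swap) ?_ ?_ ?_ ?_
    · intro p hp
      rw [Finset.mem_filter, hmemD] at hp ⊢
      exact ⟨⟨⟨hp.1.1.2, hp.1.1.1⟩, hp.1.2.symm⟩, hp.2⟩
    · intro p hp
      rw [Finset.mem_filter, hmemD] at hp ⊢
      exact ⟨⟨⟨hp.1.1.2, hp.1.1.1⟩, hp.1.2.symm⟩, hp.2⟩
    · intro p _; exact Prod.swap_swap p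
    · intro p _; exact Prod.swap_swap p
  have hlt : D.filter (fun p => p.1 < p.2)
      = (Finset.range n ×ˢ Finset.range n).filter (fun p => p.1 < p.2 ∧ g p.1 = g p.2) := by
    ext p
    rw [Finset.mem_filter, hmemD, Finset.mem_filter, Finset.mem_product, Finset.mem_range,
      Finset.mem_range]
    tauto
  have h4 : D.card = n + 2 * (D.filter (fun p => p.1 < p.2)).card := by
    conv_lhs => rw [hsplit]
    rw [Finset.card_union_of_disjoint hd1, Finset.card_union_of_disjoint hd2,
      hcard_eq, hswap]
    ring
  rw [h3, h4, hlt]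

lemma comb_real (hg : ∀ j < n, g j < n) :
    ∑ t ∈ Finset.range n, ((((Finset.range n).filter (fun j => g j = t)).card : ℝ) - 1) ^ 2
      = 2 * (((Finset.range n ×ˢ Finset.range n).filter (fun p => p.1 < p.2 ∧ g p.1 = g p.2)).card : ℝ) := by
  have e1 : ∀ c : ℝ, (c - 1) ^ 2 = c ^ 2 - 2 * c + 1 := fun c => by ring
  have h1 : (∑ t ∈ Finset.range n, (((Finset.range n).filter (fun j => g j = t)).card : ℝ) ^ 2)
      = (n : ℝ) + 2 * (((Finset.range n ×ˢ Finset.range n).filter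
          (fun p => p.1 < p.2 ∧ g p.1 = g p.2)).card : ℝ) := by
    exact_mod_cast congrArg (Nat.cast (R := ℝ)) (comb_sum_sq hg)
  have h2 : (∑ t ∈ Finset.range n, (((Finset.range n).filter (fun j => g j = t)).card : ℝ)) = (n : ℝ) := by
    exact_mod_cast congrArg (Nat.cast (R := ℝ)) (comb_sum_card hg)
  simp_rw [e1]
  rw [Finset.sum_add_distrib, Finset.sum_sub_distrib, ← Finset.mul_sum, h1, h2,
    Finset.sum_const, Finset.card_range, nsmul_eq_mul, mul_one]
  ring
end Comb

section Aux

variable {Ω : Type*} [MeasurableSpace Ω] {P : Measure Ω} [IsProbabilityMeasure P]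

lemma aux_indepSet_indicator {A B : Set Ω} (hA : MeasurableSet A) (hB : MeasurableSet B)
    (h : P (A ∩ B) = P A * P B) :
    IndepFun (A.indicator fun _ => (1:ℝ)) (B.indicator fun _ => (1:ℝ)) P := by
  have hAB : IndepSet A B P := (indepSet_iff_measure_inter_eq_mul hA hB P).mpr h
  have hA' : Measurable[MeasurableSpace.generateFrom {A}] (A.indicator fun _ => (1:ℝ)) :=
    measurable_const.indicator (MeasurableSpace.measurableSet_generateFrom rfl)
  have hB' : Measurable[MeasurableSpace.generateFrom {B}] (B.indicator fun _ => (1:ℝ)) :=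
    measurable_const.indicator (MeasurableSpace.measurableSet_generateFrom rfl)
  exact indep_of_indep_of_le_left (indep_of_indep_of_le_right hAB hB'.comap_le) hA'.comap_le

omit [IsProbabilityMeasure P] in
lemma aux_meas_eq_inter_of_compl_null {s t : Set Ω} (h : P tᶜ = 0) : P s = P (s ∩ t) := by
  refine le_antisymm ?_ (measure_mono inter_subset_left)
  calc P s ≤ P ((s ∩ t) ∪ tᶜ) := measure_mono (fun ω hω => by
        by_cases h' : ω ∈ t
        · exact Or.inl ⟨hω, h'⟩
        · exact Or.inr h')
    _ ≤ P (s ∩ t) + P tᶜ := measure_union_le _ _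
    _ = P (s ∩ t) := by rw [h, add_zero]

variable {n : ℕ} {ξ : ℕ → Ω → ℕ}

lemma aux_enn_cancel (hn : 0 < n) : (n : ℝ≥0∞) * (1 / n) = 1 := by
  rw [one_div, ENNReal.mul_inv_cancel (by exact_mod_cast hn.ne') (ENNReal.natCast_ne_top n)]

omit [IsProbabilityMeasure P] in
lemma aux_meas_inter
    (hindep : iIndepFun (fun j : Fin n => ξ j.1) P)
    (S : Finset (Fin n)) (τ : Fin n → ℕ) :
    P (⋂ j ∈ S, {ω | ξ j.1 ω = τ j}) = ∏ j ∈ S, P {ω | ξ j.1 ω = τ j} :=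
  hindep.meas_biInter (fun j _ => ⟨{τ j}, trivial, rfl⟩)

omit [IsProbabilityMeasure P] in
lemma aux_ms (hmeas : ∀ j, Measurable (ξ j)) (j : ℕ) (s : Set ℕ) :
    MeasurableSet {ω | ξ j ω ∈ s} := hmeas j trivial

lemma aux_prob_lt (hn : 0 < n) (hmeas : ∀ j, Measurable (ξ j))
    (hunif : ∀ j < n, ∀ i < n, P {ω | ξ j ω = i} = 1 / (n : ℝ≥0∞))
    {j : ℕ} (hj : j < n) : P {ω | ξ j ω < n} = 1 := by
  have hset : {ω | ξ j ω < n} = ⋃ i ∈ Finset.range n, {ω | ξ j ω = i} := by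
    ext ω; simp
  have hd : (↑(Finset.range n) : Set ℕ).PairwiseDisjoint (fun i => {ω | ξ j ω = i}) := by
    intro i _ k _ hik
    rw [Function.onFun, Set.disjoint_left]
    intro ω h1 h2
    exact hik ((h1 : ξ j ω = i) ▸ (h2 : ξ j ω = k))
  rw [hset, measure_biUnion_finset hd (fun i _ => aux_ms hmeas j {x | x = i})]
  rw [Finset.sum_congr rfl (fun i hi => hunif j hj i (Finset.mem_range.1 hi))]
  rw [Finset.sum_const, Finset.card_range, nsmul_eq_mul]
  exact aux_enn_cancel hn

lemma aux_compl_null (hn : 0 < n) (hmeas : ∀ j, Measurable (ξ j))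
    (hunif : ∀ j < n, ∀ i < n, P {ω | ξ j ω = i} = 1 / (n : ℝ≥0∞))
    {j : ℕ} (hj : j < n) : P {ω | ξ j ω < n}ᶜ = 0 := by
  have hms : MeasurableSet {ω | ξ j ω < n} := aux_ms hmeas j {k | k < n}
  rw [prob_compl_eq_zero_iff hms]
  exact aux_prob_lt hn hmeas hunif hj

lemma aux_prob_pair (hn : 0 < n) (hmeas : ∀ j, Measurable (ξ j))
    (hunif : ∀ j < n, ∀ i < n, P {ω | ξ j ω = i} = 1 / (n : ℝ≥0∞))
    (hindep : iIndepFun (fun j : Fin n => ξ j.1) P)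
    {a b : ℕ} (ha : a < n) (hb : b < n) (hab : a ≠ b) :
    P {ω | ξ a ω = ξ b ω} = 1 / (n : ℝ≥0∞) := by
  rw [aux_meas_eq_inter_of_compl_null (aux_compl_null hn hmeas hunif ha)]
  have hset : {ω | ξ a ω = ξ b ω} ∩ {ω | ξ a ω < n}
      = ⋃ i ∈ Finset.range n, ({ω | ξ a ω = i} ∩ {ω | ξ b ω = i}) := by
    ext ω
    simp only [Set.mem_inter_iff, Set.mem_setOf_eq, Set.mem_iUnion, Finset.mem_range]
    constructor
    · rintro ⟨h1, h2⟩; exact ⟨ξ a ω, h2, rfl, h1.symm⟩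
    · rintro ⟨i, hi, h1, h2⟩; exact ⟨h1.trans h2.symm, h1 ▸ hi⟩
  have hd : (↑(Finset.range n) : Set ℕ).PairwiseDisjoint
      (fun i => {ω | ξ a ω = i} ∩ {ω | ξ b ω = i}) := by
    intro i _ k _ hik
    rw [Function.onFun, Set.disjoint_left]
    intro ω h1 h2
    exact hik ((h1.1 : ξ a ω = i) ▸ (h2.1 : ξ a ω = k))
  have hterm : ∀ i < n, P ({ω | ξ a ω = i} ∩ {ω | ξ b ω = i}) = 1 / n * (1 / n) := by
    intro i hi
    have hab' : (⟨a, ha⟩ : Fin n) ≠ ⟨b, hb⟩ := by simp [Fin.ext_iff, hab]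
    have h2 := aux_meas_inter hindep {⟨a, ha⟩, ⟨b, hb⟩} (fun _ => i)
    rw [Finset.set_biInter_insert, Finset.set_biInter_singleton,
      Finset.prod_pair hab'] at h2
    rw [h2, hunif a ha i hi, hunif b hb i hi]
  rw [hset, measure_biUnion_finset hd
    (fun i _ => (aux_ms hmeas a {x | x = i}).inter (aux_ms hmeas b {x | x = i}))]
  rw [Finset.sum_congr rfl (fun i hi => hterm i (Finset.mem_range.1 hi))]
  rw [Finset.sum_const, Finset.card_range, nsmul_eq_mul, ← mul_assoc, aux_enn_cancel hn, one_mul]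


variable {n : ℕ} {ξ : ℕ → Ω → ℕ}

lemma aux_one_div_sq : (1/(n:ℝ≥0∞)) * (1/n) = 1/(n:ℝ≥0∞)^2 := by
  rw [one_div, one_div, ← ENNReal.mul_inv (Or.inr (ENNReal.natCast_ne_top n))
    (Or.inl (ENNReal.natCast_ne_top n)), ← pow_two]

lemma aux_prob_triple (hn : 0 < n) (hmeas : ∀ j, Measurable (ξ j))
    (hunif : ∀ j < n, ∀ i < n, P {ω | ξ j ω = i} = 1 / (n : ℝ≥0∞))
    (hindep : iIndepFun (fun j : Fin n => ξ j.1) P)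
    {c x y : ℕ} (hc : c < n) (hx : x < n) (hy : y < n)
    (hcx : c ≠ x) (hcy : c ≠ y) (hxy : x ≠ y) :
    P ({ω | ξ c ω = ξ x ω} ∩ {ω | ξ c ω = ξ y ω}) = 1 / (n : ℝ≥0∞) ^ 2 := by
  rw [aux_meas_eq_inter_of_compl_null (aux_compl_null hn hmeas hunif hc)]
  have hset : ({ω | ξ c ω = ξ x ω} ∩ {ω | ξ c ω = ξ y ω}) ∩ {ω | ξ c ω < n}
      = ⋃ i ∈ Finset.range n,
        ({ω | ξ c ω = i} ∩ ({ω | ξ x ω = i} ∩ {ω | ξ y ω = i})) := by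
    ext ω
    simp only [Set.mem_inter_iff, Set.mem_setOf_eq, Set.mem_iUnion, Finset.mem_range]
    constructor
    · rintro ⟨⟨h1, h2⟩, h3⟩; exact ⟨ξ c ω, h3, rfl, h1.symm, h2.symm⟩
    · rintro ⟨i, hi, h1, h2, h3⟩; exact ⟨⟨h1.trans h2.symm, h1.trans h3.symm⟩, h1 ▸ hi⟩
  have hd : (↑(Finset.range n) : Set ℕ).PairwiseDisjoint
      (fun i => {ω | ξ c ω = i} ∩ ({ω | ξ x ω = i} ∩ {ω | ξ y ω = i})) := by
    intro i _ k _ hik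
    rw [Function.onFun, Set.disjoint_left]
    intro ω h1 h2
    exact hik ((h1.1 : ξ c ω = i) ▸ (h2.1 : ξ c ω = k))
  have hterm : ∀ i < n,
      P ({ω | ξ c ω = i} ∩ ({ω | ξ x ω = i} ∩ {ω | ξ y ω = i}))
        = 1 / n * (1 / n * (1 / (n:ℝ≥0∞))) := by
    intro i hi
    have h1 : (⟨c, hc⟩ : Fin n) ∉ ({⟨x, hx⟩, ⟨y, hy⟩} : Finset (Fin n)) := by
      simp [Fin.ext_iff, hcx, hcy]
    have h2 : (⟨x, hx⟩ : Fin n) ≠ ⟨y, hy⟩ := by simp [Fin.ext_iff, hxy]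
    have h3 := aux_meas_inter hindep {⟨c, hc⟩, ⟨x, hx⟩, ⟨y, hy⟩} (fun _ => i)
    rw [Finset.set_biInter_insert, Finset.set_biInter_insert,
      Finset.set_biInter_singleton, Finset.prod_insert h1, Finset.prod_pair h2] at h3
    rw [h3, hunif c hc i hi, hunif x hx i hi, hunif y hy i hi]
  rw [hset, measure_biUnion_finset hd (fun i _ => (aux_ms hmeas c {v | v = i}).inter
    ((aux_ms hmeas x {v | v = i}).inter (aux_ms hmeas y {v | v = i})))]
  rw [Finset.sum_congr rfl (fun i hi => hterm i (Finset.mem_range.1 hi))]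
  rw [Finset.sum_const, Finset.card_range, nsmul_eq_mul]
  calc (n : ℝ≥0∞) * (1 / n * (1 / n * (1 / n)))
      = ((n : ℝ≥0∞) * (1 / n)) * (1 / n * (1 / n)) := by ring
    _ = 1 / (n : ℝ≥0∞) ^ 2 := by
        rw [aux_enn_cancel hn, one_mul, aux_one_div_sq]

lemma aux_prob_quad (hn : 0 < n) (hmeas : ∀ j, Measurable (ξ j))
    (hunif : ∀ j < n, ∀ i < n, P {ω | ξ j ω = i} = 1 / (n : ℝ≥0∞))
    (hindep : iIndepFun (fun j : Fin n => ξ j.1) P)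
    {a b c d : ℕ} (ha : a < n) (hb : b < n) (hc : c < n) (hd : d < n)
    (hab : a ≠ b) (hcd : c ≠ d) (hac : a ≠ c) (had : a ≠ d) (hbc : b ≠ c) (hbd : b ≠ d) :
    P ({ω | ξ a ω = ξ b ω} ∩ {ω | ξ c ω = ξ d ω}) = 1 / (n : ℝ≥0∞) ^ 2 := by
  have hcompl : P ({ω | ξ a ω < n} ∩ {ω | ξ c ω < n})ᶜ = 0 := by
    rw [Set.compl_inter]
    exact measure_union_null (aux_compl_null hn hmeas hunif ha)
      (aux_compl_null hn hmeas hunif hc)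
  rw [aux_meas_eq_inter_of_compl_null hcompl]
  have hset : ({ω | ξ a ω = ξ b ω} ∩ {ω | ξ c ω = ξ d ω})
        ∩ ({ω | ξ a ω < n} ∩ {ω | ξ c ω < n})
      = ⋃ q ∈ Finset.range n ×ˢ Finset.range n,
        (({ω | ξ a ω = q.1} ∩ {ω | ξ b ω = q.1}) ∩
          ({ω | ξ c ω = q.2} ∩ {ω | ξ d ω = q.2})) := by
    ext ω
    simp only [Set.mem_inter_iff, Set.mem_setOf_eq, Set.mem_iUnion, Finset.mem_product,
      Finset.mem_range]
    constructor
    · rintro ⟨⟨h1, h2⟩, h3, h4⟩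
      exact ⟨(ξ a ω, ξ c ω), ⟨h3, h4⟩, ⟨rfl, h1.symm⟩, ⟨rfl, h2.symm⟩⟩
    · rintro ⟨q, ⟨hq1, hq2⟩, ⟨g1, g2⟩, g3, g4⟩
      exact ⟨⟨g1.trans g2.symm, g3.trans g4.symm⟩, g1 ▸ hq1, g3 ▸ hq2⟩
  have hdisj : (↑(Finset.range n ×ˢ Finset.range n) : Set (ℕ × ℕ)).PairwiseDisjoint
      (fun q => (({ω | ξ a ω = q.1} ∩ {ω | ξ b ω = q.1}) ∩
          ({ω | ξ c ω = q.2} ∩ {ω | ξ d ω = q.2}))) := by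
    intro q _ r _ hqr
    rw [Function.onFun, Set.disjoint_left]
    intro ω h1 h2
    exact hqr (Prod.ext ((h1.1.1 : ξ a ω = q.1) ▸ (h2.1.1 : ξ a ω = r.1))
      ((h1.2.1 : ξ c ω = q.2) ▸ (h2.2.1 : ξ c ω = r.2)))
  have hterm : ∀ q ∈ Finset.range n ×ˢ Finset.range n,
      P (({ω | ξ a ω = q.1} ∩ {ω | ξ b ω = q.1}) ∩
          ({ω | ξ c ω = q.2} ∩ {ω | ξ d ω = q.2}))
        = 1 / n * (1 / n * (1 / n * (1 / (n:ℝ≥0∞)))) := by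
    rintro ⟨i, i'⟩ hq
    rw [Finset.mem_product, Finset.mem_range, Finset.mem_range] at hq
    have m1 : (⟨a, ha⟩ : Fin n) ∉ ({⟨b, hb⟩, ⟨c, hc⟩, ⟨d, hd⟩} : Finset (Fin n)) := by
      simp [Fin.ext_iff, hab, hac, had]
    have m2 : (⟨b, hb⟩ : Fin n) ∉ ({⟨c, hc⟩, ⟨d, hd⟩} : Finset (Fin n)) := by
      simp [Fin.ext_iff, hbc, hbd]
    have m3 : (⟨c, hc⟩ : Fin n) ≠ ⟨d, hd⟩ := by simp [Fin.ext_iff, hcd]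
    have h3 := aux_meas_inter hindep {⟨a, ha⟩, ⟨b, hb⟩, ⟨c, hc⟩, ⟨d, hd⟩}
      (fun j => if j.1 = a ∨ j.1 = b then i else i')
    rw [Finset.set_biInter_insert, Finset.set_biInter_insert, Finset.set_biInter_insert,
      Finset.set_biInter_singleton, Finset.prod_insert m1, Finset.prod_insert m2,
      Finset.prod_pair m3] at h3
    norm_num [Ne.symm hac, Ne.symm hbc, Ne.symm had, Ne.symm hbd] at h3
    dsimp only
    rw [Set.inter_assoc]
    rw [h3, hunif a ha i hq.1, hunif b hb i hq.1, hunif c hc i' hq.2, hunif d hd i' hq.2]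
  rw [hset, measure_biUnion_finset hdisj (fun q _ =>
    ((aux_ms hmeas a {v | v = q.1}).inter (aux_ms hmeas b {v | v = q.1})).inter
      ((aux_ms hmeas c {v | v = q.2}).inter (aux_ms hmeas d {v | v = q.2})))]
  rw [Finset.sum_congr rfl hterm, Finset.sum_const, Finset.card_product, Finset.card_range,
    nsmul_eq_mul]
  push_cast
  calc (n : ℝ≥0∞) * n * (1 / n * (1 / n * (1 / n * (1 / n))))
      = ((n : ℝ≥0∞) * (1 / n)) * (((n : ℝ≥0∞) * (1 / n)) * (1 / n * (1 / n))) := by ring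
    _ = 1 / (n : ℝ≥0∞) ^ 2 := by
        rw [aux_enn_cancel hn, one_mul, one_mul, aux_one_div_sq]

lemma aux_prob_pairpair (hn : 0 < n) (hmeas : ∀ j, Measurable (ξ j))
    (hunif : ∀ j < n, ∀ i < n, P {ω | ξ j ω = i} = 1 / (n : ℝ≥0∞))
    (hindep : iIndepFun (fun j : Fin n => ξ j.1) P)
    {a b c d : ℕ} (hab : a < b) (hb : b < n) (hcd : c < d) (hd : d < n)
    (hne : (a, b) ≠ (c, d)) :
    P ({ω | ξ a ω = ξ b ω} ∩ {ω | ξ c ω = ξ d ω}) = 1 / (n : ℝ≥0∞) ^ 2 := by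
  have hsym : ∀ u v : ℕ, {ω | ξ u ω = ξ v ω} = {ω | ξ v ω = ξ u ω} := by
    intro u v; ext ω; exact ⟨Eq.symm, Eq.symm⟩
  have ha : a < n := hab.trans hb
  have hc : c < n := hcd.trans hd
  by_cases h1 : a = c
  · subst h1
    have hbd : b ≠ d := fun h => hne (by rw [h])
    exact aux_prob_triple hn hmeas hunif hindep ha hb hd hab.ne (hcd.ne) hbd
  · by_cases h2 : b = d
    · subst h2
      rw [hsym a b, hsym c b]
      exact aux_prob_triple hn hmeas hunif hindep hb ha hc
        (Ne.symm hab.ne) (Ne.symm hcd.ne) h1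
    · by_cases h3 : b = c
      · subst h3
        rw [hsym a b]
        exact aux_prob_triple hn hmeas hunif hindep hb ha hd
          (Ne.symm hab.ne) hcd.ne (by omega)
      · by_cases h4 : a = d
        · subst h4
          rw [hsym c a]
          exact aux_prob_triple hn hmeas hunif hindep ha hb hc
            hab.ne (Ne.symm hcd.ne) (by omega)
        · exact aux_prob_quad hn hmeas hunif hindep ha hb hc hd
            hab.ne hcd.ne h1 h4 h3 h2


lemma aux_key (hn : 2 ≤ n) (hmeas : ∀ j, Measurable (ξ j))
    (hunif : ∀ j < n, ∀ i < n, P {ω | ξ j ω = i} = 1 / (n : ℝ≥0∞))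
    (hindep : iIndepFun (fun j : Fin n => ξ j.1) P)
    {e : ℝ} (he : 0 < e) :
    P {ω | e < |(1 / (n : ℝ)) * (∑ t ∈ Finset.range n,
        (Real.sqrt ((n : ℝ) / ((n : ℝ) - 1)) *
          (((Finset.filter (fun j => ξ j ω = t) (Finset.range n)).card : ℝ) - 1)) ^ 2) - 1|}
      ≤ ENNReal.ofReal (2 / (e ^ 2 * ((n : ℝ) - 1))) := by
  classical
  have hn0 : 0 < n := by omega
  have hn2R : (2:ℝ) ≤ (n:ℝ) := by exact_mod_cast hn
  have hnm1 : (0:ℝ) < (n:ℝ) - 1 := by linarith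
  have hnR : (0:ℝ) < (n:ℝ) := by linarith
  set I : Finset (ℕ × ℕ) := (Finset.range n ×ˢ Finset.range n).filter (fun p => p.1 < p.2)
    with hI
  set A : ℕ × ℕ → Set Ω := fun p => {ω | ξ p.1 ω = ξ p.2 ω} with hA
  set X : ℕ × ℕ → Ω → ℝ := fun p => (A p).indicator (fun _ => (1:ℝ)) with hX
  set Y : Ω → ℝ := ∑ p ∈ I, X p with hY
  have hImem : ∀ p ∈ I, p.1 < p.2 ∧ p.2 < n := by
    intro p hp
    rw [hI, Finset.mem_filter, Finset.mem_product, Finset.mem_range, Finset.mem_range] at hp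
    exact ⟨hp.2, hp.1.2⟩
  have hAms : ∀ p : ℕ × ℕ, MeasurableSet (A p) :=
    fun p => measurableSet_eq_fun (hmeas p.1) (hmeas p.2)
  have hPA : ∀ p ∈ I, P (A p) = 1 / (n : ℝ≥0∞) := by
    intro p hp
    obtain ⟨h1, h2⟩ := hImem p hp
    exact aux_prob_pair hn0 hmeas hunif hindep (h1.trans h2) h2 h1.ne
  have hXmem : ∀ p ∈ I, MemLp (X p) 2 P :=
    fun p _ => memLp_indicator_const 2 (hAms p) 1 (Or.inr (measure_ne_top P _))
  have htoReal : (1 / (n : ℝ≥0∞)).toReal = 1 / (n : ℝ) := by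
    rw [one_div, one_div, ENNReal.toReal_inv, ENNReal.toReal_natCast]
  have hXint : ∀ p ∈ I, ∫ ω, X p ω ∂P = 1 / (n : ℝ) := by
    intro p hp
    rw [hX]
    rw [integral_indicator_const (1:ℝ) (hAms p), measureReal_def, hPA p hp, smul_eq_mul, mul_one, htoReal]
  have hXsq : ∀ p : ℕ × ℕ, (X p) ^ 2 = X p := by
    intro p
    funext ω
    by_cases h : ω ∈ A p <;> simp [hX, Set.indicator_apply, h]
  have hvarX : ∀ p ∈ I, variance (X p) P = 1 / (n:ℝ) - (1 / (n:ℝ)) ^ 2 := by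
    intro p hp
    rw [variance_eq_sub (hXmem p hp), hXsq p]
    rw [show P[X p] = ∫ ω, X p ω ∂P from rfl, hXint p hp]
  have hIndepX : ∀ p ∈ I, ∀ q ∈ I, p ≠ q → IndepFun (X p) (X q) P := by
    intro p hp q hq hpq
    apply aux_indepSet_indicator (hAms p) (hAms q)
    obtain ⟨h1, h2⟩ := hImem p hp
    obtain ⟨h3, h4⟩ := hImem q hq
    have hne : (p.1, p.2) ≠ (q.1, q.2) := by
      intro h
      exact hpq (Prod.ext (congrArg Prod.fst h) (congrArg Prod.snd h))
    rw [hPA p hp, hPA q hq, aux_one_div_sq]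
    exact aux_prob_pairpair hn0 hmeas hunif hindep h1 h2 h3 h4 hne
  -- cardinality of I
  have hIcard : 2 * I.card = n * (n - 1) := by
    have h5 : I.card = ∑ b ∈ Finset.range n, b := by
      rw [Finset.card_eq_sum_card_fiberwise
        (f := Prod.snd) (t := Finset.range n)
        (fun p hp => Finset.mem_range.2 (hImem p hp).2)]
      refine Finset.sum_congr rfl ?_
      intro b hb
      have himg : I.filter (fun p => p.2 = b) = (Finset.range b).image (fun a => (a, b)) := by
        ext p
        simp only [hI, Finset.mem_filter, Finset.mem_product, Finset.mem_range,
          Finset.mem_image]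
        constructor
        · rintro ⟨⟨⟨_, _⟩, hlt⟩, hb2⟩
          exact ⟨p.1, hb2 ▸ hlt, Prod.ext rfl hb2.symm⟩
        · rintro ⟨a, hab, rfl⟩
          exact ⟨⟨⟨hab.trans (Finset.mem_range.1 hb), Finset.mem_range.1 hb⟩, hab⟩, rfl⟩
      rw [himg, Finset.card_image_of_injective _
        (fun u v huv => by simpa using congrArg Prod.fst huv), Finset.card_range]
    rw [h5, mul_comm, Finset.sum_range_id_mul_two]
  have hIcardR : (I.card : ℝ) = (n:ℝ) * ((n:ℝ) - 1) / 2 := by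
    have h6 := congrArg (Nat.cast (R := ℝ)) hIcard
    push_cast [Nat.cast_sub (by omega : 1 ≤ n)] at h6
    linarith
  have hEY : ∫ ω, Y ω ∂P = ((n:ℝ) - 1) / 2 := by
    have : ∫ ω, Y ω ∂P = ∑ p ∈ I, ∫ ω, X p ω ∂P := by
      rw [hY]
      rw [show (∫ ω, (∑ p ∈ I, X p) ω ∂P) = ∫ ω, (∑ p ∈ I, X p ω) ∂P from by
        congr 1; funext ω; rw [Finset.sum_apply]]
      exact integral_finset_sum I (fun p hp => (hXmem p hp).integrable one_le_two)
    rw [this, Finset.sum_congr rfl hXint, Finset.sum_const, nsmul_eq_mul, hIcardR]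
    field_simp
  have hYmem : MemLp Y 2 P := by
    rw [hY]; exact memLp_finset_sum' I hXmem
  have hvarY : variance Y P ≤ ((n:ℝ) - 1) / 2 := by
    rw [hY, IndepFun.variance_sum hXmem
      (fun p hp q hq hpq => hIndepX p hp q hq hpq)]
    rw [Finset.sum_congr rfl hvarX, Finset.sum_const, nsmul_eq_mul, hIcardR]
    have h7 : 1 / (n:ℝ) - (1 / (n:ℝ)) ^ 2 ≤ 1 / (n:ℝ) := by nlinarith [sq_nonneg (1 / (n:ℝ))]
    calc (n:ℝ) * ((n:ℝ) - 1) / 2 * (1 / (n:ℝ) - (1 / (n:ℝ)) ^ 2)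
        ≤ (n:ℝ) * ((n:ℝ) - 1) / 2 * (1 / (n:ℝ)) := by
          apply mul_le_mul_of_nonneg_left h7
          positivity
      _ = ((n:ℝ) - 1) / 2 := by field_simp
  set c : ℝ := e * ((n:ℝ) - 1) / 2 with hc
  have hcpos : 0 < c := by positivity
  have hcheb := meas_ge_le_variance_div_sq (μ := P) hYmem hcpos
  have hbound : variance Y P / c ^ 2 ≤ 2 / (e ^ 2 * ((n:ℝ) - 1)) := by
    rw [div_le_div_iff₀ (by positivity) (by positivity)]
    calc variance Y P * (e ^ 2 * ((n:ℝ) - 1))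
        ≤ (((n:ℝ) - 1) / 2) * (e ^ 2 * ((n:ℝ) - 1)) :=
          mul_le_mul_of_nonneg_right hvarY (by positivity)
      _ = 2 * c ^ 2 := by rw [hc]; ring
  -- the a.s. good event
  set G : Set Ω := {ω | ∀ j, j < n → ξ j ω < n} with hG
  have hGc : P Gᶜ = 0 := by
    have hsub : Gᶜ ⊆ ⋃ j ∈ Finset.range n, {ω | ξ j ω < n}ᶜ := by
      intro ω hω
      rw [Set.mem_compl_iff, hG, Set.mem_setOf_eq] at hω
      push_neg at hω
      obtain ⟨j, hj, hωj⟩ := hω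
      exact Set.mem_biUnion (Finset.mem_range.2 hj) (not_lt.2 hωj : ¬ ξ j ω < n)
    refine measure_mono_null hsub (le_antisymm ?_ (zero_le ..))
    calc P (⋃ j ∈ Finset.range n, {ω | ξ j ω < n}ᶜ)
        ≤ ∑ j ∈ Finset.range n, P {ω | ξ j ω < n}ᶜ := measure_biUnion_finset_le _ _
      _ = 0 := by
          rw [Finset.sum_congr rfl (fun j hj =>
            aux_compl_null hn0 hmeas hunif (Finset.mem_range.1 hj))]
          simp
  -- inclusion of the target event
  have hsub : {ω | e < |(1 / (n : ℝ)) * (∑ t ∈ Finset.range n,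
        (Real.sqrt ((n : ℝ) / ((n : ℝ) - 1)) *
          (((Finset.filter (fun j => ξ j ω = t) (Finset.range n)).card : ℝ) - 1)) ^ 2) - 1|}
      ⊆ {ω | c ≤ |Y ω - P[Y]|} ∪ Gᶜ := by
    intro ω hω
    by_cases hωG : ω ∈ G
    · left
      have hg : ∀ j < n, ξ j ω < n := hωG
      have hYω : Y ω = (((Finset.range n ×ˢ Finset.range n).filter
          (fun p => p.1 < p.2 ∧ ξ p.1 ω = ξ p.2 ω)).card : ℝ) := by
        rw [hY, Finset.sum_apply]
        rw [Finset.sum_congr rfl (fun p _ => show X p ω = if ξ p.1 ω = ξ p.2 ω then (1:ℝ) else 0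
          from by rw [hX]; simp [Set.indicator_apply, hA])]
        rw [Finset.sum_boole, hI, Finset.filter_filter]
      have hexpr : (1 / (n : ℝ)) * (∑ t ∈ Finset.range n,
            (Real.sqrt ((n : ℝ) / ((n : ℝ) - 1)) *
              (((Finset.filter (fun j => ξ j ω = t) (Finset.range n)).card : ℝ) - 1)) ^ 2) - 1
          = 2 / ((n:ℝ) - 1) * (Y ω - ((n:ℝ) - 1) / 2) := by
        have hsq : ∀ x : ℝ, (Real.sqrt ((n : ℝ) / ((n : ℝ) - 1)) * x) ^ 2
            = ((n : ℝ) / ((n : ℝ) - 1)) * x ^ 2 := by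
          intro x; rw [mul_pow, Real.sq_sqrt (by positivity)]
        simp_rw [hsq]
        rw [← Finset.mul_sum, comb_real hg, hYω]
        field_simp
      rw [Set.mem_setOf_eq, hexpr] at hω
      rw [Set.mem_setOf_eq, show P[Y] = ∫ ω, Y ω ∂P from rfl, hEY]
      rw [abs_mul, abs_of_pos (by positivity : (0:ℝ) < 2 / ((n:ℝ) - 1))] at hω
      rw [hc]
      rw [show e * ((n:ℝ) - 1) / 2 = e / (2 / ((n:ℝ) - 1)) from by field_simp]
      rw [div_le_iff₀ (by positivity)]
      calc e ≤ 2 / ((n:ℝ) - 1) * |Y ω - ((n:ℝ) - 1) / 2| := hω.le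
        _ = |Y ω - ((n:ℝ) - 1) / 2| * (2 / ((n:ℝ) - 1)) := by ring
    · right; exact hωG
  calc P {ω | e < |(1 / (n : ℝ)) * (∑ t ∈ Finset.range n,
        (Real.sqrt ((n : ℝ) / ((n : ℝ) - 1)) *
          (((Finset.filter (fun j => ξ j ω = t) (Finset.range n)).card : ℝ) - 1)) ^ 2) - 1|}
      ≤ P ({ω | c ≤ |Y ω - P[Y]|} ∪ Gᶜ) := measure_mono hsub
    _ ≤ P {ω | c ≤ |Y ω - P[Y]|} + P Gᶜ := measure_union_le _ _
    _ = P {ω | c ≤ |Y ω - P[Y]|} := by rw [hGc, add_zero]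
    _ ≤ ENNReal.ofReal (variance Y P / c ^ 2) := hcheb
    _ ≤ ENNReal.ofReal (2 / (e ^ 2 * ((n : ℝ) - 1))) := ENNReal.ofReal_le_ofReal hbound

end Aux

/-- For multinomial weights (w₁,…,wₙ) ~ Mult(n; 1/n,…,1/n) (realized as cell
counts of n i.i.d. uniform draws ξ over n cells) and Wₜ = √(n/(n−1))(wₜ − 1),
one has (1/n) Σₜ Wₜ² → 1 in probability. -/
theorem multinomial_weights_lln
    {Ω : Type*} [MeasurableSpace Ω] (P : Measure Ω) [IsProbabilityMeasure P]
    (ξ : ℕ → ℕ → Ω → ℕ)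
    (hmeas : ∀ n j, Measurable (ξ n j))
    (hunif : ∀ n : ℕ, 0 < n → ∀ j ∈ Finset.range n, ∀ i ∈ Finset.range n,
      P {ω | ξ n j ω = i} = 1 / (n : ℝ≥0∞))
    (hindep : ∀ n : ℕ, iIndepFun
      (fun j : Fin n => ξ n j.1) P)
    (w : ℕ → ℕ → Ω → ℕ)
    (hw : ∀ n t ω, w n t ω = (Finset.filter (fun j => ξ n j ω = t) (Finset.range n)).card) :
    ∀ e > (0:ℝ), Tendsto (fun n : ℕ =>
      P {ω | e < |(1 / (n : ℝ)) * (∑ t ∈ Finset.range n,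
          (Real.sqrt ((n : ℝ) / ((n : ℝ) - 1)) * ((w n t ω : ℝ) - 1)) ^ 2) - 1|})
      atTop (𝓝 0) := by
  intro e he
  have hupper : ∀ᶠ n : ℕ in atTop,
      P {ω | e < |(1 / (n : ℝ)) * (∑ t ∈ Finset.range n,
          (Real.sqrt ((n : ℝ) / ((n : ℝ) - 1)) * ((w n t ω : ℝ) - 1)) ^ 2) - 1|}
        ≤ ENNReal.ofReal (2 / (e ^ 2 * ((n : ℝ) - 1))) := by
    filter_upwards [eventually_ge_atTop 2] with n hn
    have hunif' : ∀ j < n, ∀ i < n, P {ω | ξ n j ω = i} = 1 / (n : ℝ≥0∞) :=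
      fun j hj i hi => hunif n (by omega) j (Finset.mem_range.2 hj) i (Finset.mem_range.2 hi)
    have hkey := aux_key (P := P) hn (hmeas n) hunif' (hindep n) he
    simpa only [hw] using hkey
  have hreal : Tendsto (fun n : ℕ => 2 / (e ^ 2 * ((n:ℝ) - 1))) atTop (𝓝 0) := by
    apply Tendsto.div_atTop tendsto_const_nhds
    apply Tendsto.const_mul_atTop (by positivity : (0:ℝ) < e ^ 2)
    exact (tendsto_atTop_add_const_right atTop (-1)
      (tendsto_natCast_atTop_atTop (R := ℝ))).congr (fun n => by ring)
  have hofReal := ENNReal.tendsto_ofReal hreal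
  rw [ENNReal.ofReal_zero] at hofReal
  exact tendsto_of_tendsto_of_tendsto_of_le_of_le' tendsto_const_nhds hofReal
    (Eventually.of_forall (fun n => zero_le ..)) hupper
end
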